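/- Let g₀ be the Weibull density with shape parameter γ > 0, g₀(t) = γ t^{γ−1} e^{−t^γ} for t ≥ 0, with mean μ. Then the Fisher information for scale of the length-biased density f₁(x) = x g₀(x)/μ equals γ(γ+1). -/

import Mathlib

open MeasureTheory Set Real

lemma gammaInt' {s : ℝ} (hs : -1 < s) :
    ∫ x in Ioi (0:ℝ), x ^ s * Real.exp (-x) = Real.Gamma (s + 1) := by
  have := integral_rpow_mul_exp_neg_rpow one_pos hs
  simpa [Real.rpow_one] using this

lemma gammaIntegrable' {s : ℝ} (hs : -1 < s) :
    IntegrableOn (fun x : ℝ => x ^ s * Real.exp (-x)) (Ioi 0) := by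
  have := integrableOn_rpow_mul_exp_neg_rpow hs one_pos
  simpa [Real.rpow_one] using this

/-- For the Weibull density `g₀(t) = γ t^(γ−1) e^(−t^γ)` with mean `μ`, the Fisher
information for scale of the length-biased density `f₁(x) = x g₀(x)/μ` equals `γ(γ+1)`. -/
theorem stmt11 (γ : ℝ) (hγ : 0 < γ)
    (g₀ : ℝ → ℝ) (hg₀ : ∀ t > (0:ℝ), g₀ t = γ * t ^ (γ - 1) * Real.exp (-(t ^ γ)))
    (μ : ℝ) (hμ : μ = ∫ t in Ioi (0:ℝ), t * g₀ t)
    (f₁ f₁' : ℝ → ℝ) (hf₁ : ∀ x, f₁ x = x * g₀ x / μ)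
    (hderiv : ∀ x ∈ Ioi (0:ℝ), HasDerivAt f₁ (f₁' x) x) :
    ∫ x in Ioi (0:ℝ), (1 + x * f₁' x / f₁ x) ^ 2 * f₁ x = γ * (γ + 1) := by
  have hγ0 : γ ≠ 0 := hγ.ne'
  set a : ℝ := 1 / γ with ha
  have ha0 : 0 < a := by positivity
  -- value of μ
  have hμval : μ = Real.Gamma (a + 1) := by
    rw [hμ]
    rw [setIntegral_congr_fun measurableSet_Ioi
      (show ∀ t ∈ Ioi (0:ℝ), t * g₀ t = γ * (t ^ γ * Real.exp (-t ^ γ)) from by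
        intro t ht
        have h1 : t ^ γ = t * t ^ (γ - 1) := by
          conv_lhs => rw [show γ = 1 + (γ - 1) by ring]
          rw [Real.rpow_add ht, Real.rpow_one]
        rw [hg₀ t ht, h1]; ring)]
    rw [MeasureTheory.integral_const_mul, integral_rpow_mul_exp_neg_rpow hγ (by linarith)]
    rw [show (γ + 1) / γ = a + 1 by rw [ha]; field_simp; ring]
    field_simp
  have hGpos : 0 < Real.Gamma (a + 1) := Real.Gamma_pos_of_pos (by linarith)
  have hμ0 : μ ≠ 0 := by rw [hμval]; exact hGpos.ne'
  -- derivative of f₁ on Ioi 0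
  have hder : ∀ x ∈ Ioi (0:ℝ),
      f₁' x = (γ * (γ * x ^ (γ - 1)) * Real.exp (-x ^ γ)
        + γ * x ^ γ * (Real.exp (-x ^ γ) * -(γ * x ^ (γ - 1)))) / μ := by
    intro x hx
    have hx0 : (0:ℝ) < x := hx
    have h1 : HasDerivAt (fun y : ℝ => y ^ γ) (γ * x ^ (γ - 1)) x :=
      Real.hasDerivAt_rpow_const (Or.inl hx0.ne')
    have h2 : HasDerivAt (fun y : ℝ => Real.exp (-y ^ γ))
        (Real.exp (-x ^ γ) * -(γ * x ^ (γ - 1))) x := h1.neg.exp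
    have h3 := ((h1.const_mul γ).mul h2).div_const μ
    have hev : f₁ =ᶠ[nhds x] (fun y => γ * y ^ γ * Real.exp (-y ^ γ) / μ) := by
      filter_upwards [isOpen_Ioi.mem_nhds hx] with y hy
      rw [hf₁ y, hg₀ y hy]
      have h1' : y ^ γ = y * y ^ (γ - 1) := by
        conv_lhs => rw [show γ = 1 + (γ - 1) by ring]
        rw [Real.rpow_add hy, Real.rpow_one]
      rw [h1']; ring
    exact (hderiv x hx).unique (h3.congr_of_eventuallyEq hev)
  -- pointwise identity for the integrand
  have hpt : ∀ x ∈ Ioi (0:ℝ), (1 + x * f₁' x / f₁ x) ^ 2 * f₁ x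
      = μ⁻¹ * ((γ * x ^ (γ - 1)) *
          ((fun u : ℝ => (1 + γ - γ * u) ^ 2 * (u ^ a * Real.exp (-u))) (x ^ γ))) := by
    intro x hx
    have hx0 : (0:ℝ) < x := hx
    have hB : (0:ℝ) < x ^ (γ - 1) := Real.rpow_pos_of_pos hx0 _
    have hAa : (x ^ γ) ^ a = x := by
      rw [← Real.rpow_mul hx0.le, ha, mul_one_div, div_self hγ0, Real.rpow_one]
    have hAA : x ^ γ = x * x ^ (γ - 1) := by
      conv_lhs => rw [show γ = 1 + (γ - 1) by ring]
      rw [Real.rpow_add hx0, Real.rpow_one]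
    show _ = μ⁻¹ * ((γ * x ^ (γ - 1)) *
        ((1 + γ - γ * x ^ γ) ^ 2 * ((x ^ γ) ^ a * Real.exp (-x ^ γ))))
    rw [hder x hx, hf₁ x, hg₀ x hx, hAa, hAA]
    have hE : Real.exp (-(x * x ^ (γ - 1))) ≠ 0 := Real.exp_ne_zero _
    field_simp
    ring
  rw [setIntegral_congr_fun measurableSet_Ioi hpt, MeasureTheory.integral_const_mul]
  have hchange := integral_comp_rpow_Ioi_of_pos
    (g := fun u : ℝ => (1 + γ - γ * u) ^ 2 * (u ^ a * Real.exp (-u))) hγ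
  simp only [smul_eq_mul] at hchange
  rw [hchange]
  -- expand the transformed integrand
  have hexp : ∀ u ∈ Ioi (0:ℝ),
      (1 + γ - γ * u) ^ 2 * (u ^ a * Real.exp (-u))
      = (1 + γ) ^ 2 * (u ^ a * Real.exp (-u))
        - 2 * γ * (1 + γ) * (u ^ (a + 1) * Real.exp (-u))
        + γ ^ 2 * (u ^ (a + 2) * Real.exp (-u)) := by
    intro u hu
    have h1 : u ^ (a + 1) = u ^ a * u := by rw [Real.rpow_add hu, Real.rpow_one]
    have h2 : u ^ (a + 2) = u ^ a * u * u := by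
      rw [show a + 2 = a + 1 + 1 by ring, Real.rpow_add hu, Real.rpow_one, h1]
    rw [h1, h2]; ring
  rw [setIntegral_congr_fun measurableSet_Ioi hexp]
  have I1 : IntegrableOn (fun u : ℝ => u ^ a * Real.exp (-u)) (Ioi 0) :=
    gammaIntegrable' (by linarith)
  have I2 : IntegrableOn (fun u : ℝ => u ^ (a + 1) * Real.exp (-u)) (Ioi 0) :=
    gammaIntegrable' (by linarith)
  have I3 : IntegrableOn (fun u : ℝ => u ^ (a + 2) * Real.exp (-u)) (Ioi 0) :=
    gammaIntegrable' (by linarith)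
  have J1 : IntegrableOn (fun u : ℝ => (1 + γ) ^ 2 * (u ^ a * Real.exp (-u))) (Ioi 0) :=
    I1.const_mul _
  have J2 : IntegrableOn (fun u : ℝ => 2 * γ * (1 + γ) * (u ^ (a + 1) * Real.exp (-u)))
      (Ioi 0) := I2.const_mul _
  have J3 : IntegrableOn (fun u : ℝ => γ ^ 2 * (u ^ (a + 2) * Real.exp (-u))) (Ioi 0) :=
    I3.const_mul _
  have Jsub : IntegrableOn (fun u : ℝ => (1 + γ) ^ 2 * (u ^ a * Real.exp (-u))
      - 2 * γ * (1 + γ) * (u ^ (a + 1) * Real.exp (-u))) (Ioi 0) := J1.sub J2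
  rw [MeasureTheory.integral_add Jsub J3,
    MeasureTheory.integral_sub J1 J2,
    MeasureTheory.integral_const_mul, MeasureTheory.integral_const_mul,
    MeasureTheory.integral_const_mul,
    gammaInt' (show (-1:ℝ) < a by linarith), gammaInt' (show (-1:ℝ) < a + 1 by linarith),
    gammaInt' (show (-1:ℝ) < a + 2 by linarith)]
  have hG2 : Real.Gamma (a + 1 + 1) = (a + 1) * Real.Gamma (a + 1) :=
    Real.Gamma_add_one (by positivity)
  have hG3 : Real.Gamma (a + 2 + 1) = (a + 2) * ((a + 1) * Real.Gamma (a + 1)) := by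
    rw [show a + 2 + 1 = (a + 1 + 1) + 1 by ring, Real.Gamma_add_one (by positivity), hG2]; ring
  rw [hμval, hG2, hG3, ha]
  field_simp
  ring
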